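/- Let G be a graph, U a set of vertices, M a maximum matching of G saturating U, and M' a maximum matching of G leaving some vertex v ∈ U unsaturated. Then there exists an alternating path with respect to M' of even length starting at v with an edge not in M' and ending with an edge of M' at a vertex w not in U. -/

import Mathlib

def FeasibleColoring {V : Type*} (G : SimpleGraph V) (c : V → Bool) : Prop :=
  (∀ u v : V, G.Adj u v → c u = true ∨ c v = true) ∧
  (∀ v : V, c v = true → ∃! w : V, G.Adj v w ∧ c w = true)

namespace SimpleGraph.Walk

variable {V : Type*} {G : SimpleGraph V}

lemma getElem_support_eq_getVert {a b : V} (p : G.Walk a b) (i : ℕ)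
    (h : i < p.support.length) : p.support[i] = p.getVert i := by
  induction p generalizing i with
  | nil => simp at h; subst h; rfl
  | cons hadj q ih =>
    cases i with
    | zero => rfl
    | succ n =>
      simp only [support_cons, List.getElem_cons_succ, getVert_cons_succ]
      exact ih n (by simp only [length_support, length_cons] at h ⊢; omega)

lemma getVert_injOn' {a b : V} {p : G.Walk a b} (hp : p.IsPath) {i j : ℕ}
    (hi : i ≤ p.length) (hj : j ≤ p.length) (h : p.getVert i = p.getVert j) : i = j := by
  have hi' : i < p.support.length := by rw [length_support]; omega
  have hj' : j < p.support.length := by rw [length_support]; omega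
  have := hp.support_nodup.getElem_inj_iff (hi := hi') (hj := hj')
  rw [getElem_support_eq_getVert, getElem_support_eq_getVert, ] at this
  exact this.mp h

lemma getElem_edges_eq {a b : V} (p : G.Walk a b) (i : ℕ)
    (h : i < p.edges.length) :
    p.edges[i] = s(p.getVert i, p.getVert (i + 1)) := by
  induction p generalizing i with
  | nil => simp at h
  | cons hadj q ih =>
    cases i with
    | zero => simp [Walk.getVert_cons_succ, Walk.getVert_zero]
    | succ n =>
      simp only [edges_cons, List.getElem_cons_succ, getVert_cons_succ]
      exact ih n (by simpa using h)

lemma mem_edges_iff' {a b : V} (p : G.Walk a b) (e : Sym2 V) :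
    e ∈ p.edges ↔ ∃ i, i < p.length ∧ e = s(p.getVert i, p.getVert (i + 1)) := by
  rw [List.mem_iff_getElem]
  constructor
  · rintro ⟨i, hi, rfl⟩
    exact ⟨i, by simpa using hi, p.getElem_edges_eq i hi⟩
  · rintro ⟨i, hi, rfl⟩
    exact ⟨i, by simpa using hi, p.getElem_edges_eq i (by simpa using hi)⟩

lemma getVert_mem_support' {a b : V} (p : G.Walk a b) {i : ℕ} (h : i ≤ p.length) :
    p.getVert i ∈ p.support :=
  mem_support_iff_exists_getVert.mpr ⟨i, rfl, h⟩

end SimpleGraph.Walk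

open SimpleGraph SimpleGraph.Walk

lemma aug_lemma {V : Type*} [Fintype V] {G : SimpleGraph V} (M M' : G.Subgraph)
    (hM : M.IsMatching) (hM' : M'.IsMatching)
    (hM'max : ∀ N : G.Subgraph, N.IsMatching → N.edgeSet.ncard ≤ M'.edgeSet.ncard)
    {y v : V} (r : G.Walk y v) (hr : r.IsPath) (hodd : r.length % 2 = 1)
    (hiffM : ∀ i, i < r.length → (M.Adj (r.getVert i) (r.getVert (i+1)) ↔ i % 2 = 0))
    (hiffM' : ∀ i, i < r.length → (M'.Adj (r.getVert i) (r.getVert (i+1)) ↔ i % 2 = 1))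
    (hy : y ∉ M'.verts) (hv : v ∉ M'.verts) : False := by
  classical
  set L := r.length with hL
  set s : ℕ → V := r.getVert with hs
  have inj : ∀ {i j : ℕ}, i ≤ L → j ≤ L → s i = s j → i = j := fun hi hj h =>
    getVert_injOn' hr hi hj h
  -- the swapped subgraph
  set M'' : G.Subgraph :=
    { verts := M'.verts ∪ {a | a ∈ r.support}
      Adj := fun a b => (M'.Adj a b ∧ s(a,b) ∉ r.edges) ∨ (M.Adj a b ∧ s(a,b) ∈ r.edges)
      adj_sub := by rintro a b (⟨h,_⟩|⟨h,_⟩) <;> exact h.adj_sub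
      edge_vert := by
        rintro a b (⟨h,_⟩|⟨_,h⟩)
        · exact Or.inl h.fst_mem
        · exact Or.inr (r.fst_mem_support_of_mem_edges h)
      symm := by
        constructor; rintro a b (⟨h,h2⟩|⟨h,h2⟩)
        · exact Or.inl ⟨h.symm, by rwa [Sym2.eq_swap]⟩
        · exact Or.inr ⟨h.symm, by rwa [Sym2.eq_swap]⟩ } with hM''
  -- claim A : structure of path-M edges at s j
  have claimA : ∀ j, j ≤ L → ∀ c, M.Adj (s j) c → s(s j, c) ∈ r.edges →
      (j % 2 = 0 ∧ j < L ∧ c = s (j+1)) ∨ (j % 2 = 1 ∧ 0 < j ∧ c = s (j-1)) := by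
    intro j hj c hadj hmem
    obtain ⟨i, hiL, he⟩ := (r.mem_edges_iff' _).mp hmem
    rw [Sym2.eq_iff] at he
    rw [← hL] at hiL
    rcases he with ⟨h1, h2⟩ | ⟨h1, h2⟩
    · have hij : j = i := inj hj hiL.le h1
      subst hij
      left
      rw [h2] at hadj
      exact ⟨(hiffM j hiL).mp hadj, hiL, h2⟩
    · have hij : j = i + 1 := inj hj (by omega) h1
      subst hij
      right
      rw [h2] at hadj
      have hpar : i % 2 = 0 := (hiffM i hiL).mp hadj.symm
      exact ⟨by omega, by omega, by simpa using h2⟩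
  -- claim B : no non-path M' edge at any path vertex
  have claimB : ∀ j, j ≤ L → ∀ c, M'.Adj (s j) c → s(s j, c) ∈ r.edges := by
    intro j hj c hadj
    by_contra hmem
    rcases Nat.eq_zero_or_pos j with rfl | hjpos
    · have h0 : s 0 = y := r.getVert_zero
      exact hy (h0 ▸ hadj.fst_mem)
    rcases eq_or_lt_of_le hj with rfl | hjL
    · have h0 : s L = v := r.getVert_length
      exact hv (h0 ▸ hadj.fst_mem)
    obtain ⟨w, hw, hwu⟩ := hM' hadj.fst_mem
    rcases Nat.even_or_odd j with hje | hjo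
    · have hpar : (j-1) % 2 = 1 := by rcases hje with ⟨m, rfl⟩; omega
      have hadj' : M'.Adj (s (j-1)) (s j) := by
        have := (hiffM' (j-1) (by omega)).mpr hpar
        rwa [show j - 1 + 1 = j by omega] at this
      have hc : c = s (j-1) := (hwu c hadj).trans (hwu _ hadj'.symm).symm
      apply hmem
      rw [hc, Sym2.eq_swap]
      exact (r.mem_edges_iff' _).mpr ⟨j-1, by omega, by rw [show j - 1 + 1 = j by omega]⟩
    · have hpar : j % 2 = 1 := Nat.odd_iff.mp hjo
      have hadj' : M'.Adj (s j) (s (j+1)) := (hiffM' j hjL).mpr hpar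
      have hc : c = s (j+1) := (hwu c hadj).trans (hwu _ hadj').symm
      apply hmem
      rw [hc]
      exact (r.mem_edges_iff' _).mpr ⟨j, hjL, rfl⟩
  -- M'' is a matching
  have hmatch : M''.IsMatching := by
    intro a ha
    by_cases hsup : a ∈ r.support
    · obtain ⟨j, hja, hjL⟩ := mem_support_iff_exists_getVert.mp hsup
      subst hja
      rcases Nat.even_or_odd j with hje | hjo
      · have hj2 : j % 2 = 0 := Nat.even_iff.mp hje
        have hjltL : j < L := by
          rcases eq_or_lt_of_le hjL with rfl | h
          · omega
          · exact h
        refine ⟨s (j+1), Or.inr ⟨(hiffM j hjltL).mpr hj2,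
            (r.mem_edges_iff' _).mpr ⟨j, hjltL, rfl⟩⟩, ?_⟩
        rintro c (⟨h1, h2⟩ | ⟨h1, h2⟩)
        · exact absurd (claimB j hjL c h1) h2
        · rcases claimA j hjL c h1 h2 with ⟨_, _, hc⟩ | ⟨hp, _, _⟩
          · exact hc
          · omega
      · have hj2 : j % 2 = 1 := Nat.odd_iff.mp hjo
        have hjpos : 0 < j := by omega
        refine ⟨s (j-1), Or.inr ⟨?_, ?_⟩, ?_⟩
        · have := (hiffM (j-1) (by omega)).mpr (by omega)
          rw [show j - 1 + 1 = j by omega] at this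
          exact this.symm
        · rw [Sym2.eq_swap]
          exact (r.mem_edges_iff' _).mpr ⟨j-1, by omega, by rw [show j - 1 + 1 = j by omega]⟩
        · rintro c (⟨h1, h2⟩ | ⟨h1, h2⟩)
          · exact absurd (claimB j hjL c h1) h2
          · rcases claimA j hjL c h1 h2 with ⟨hp, _, _⟩ | ⟨_, _, hc⟩
            · omega
            · exact hc
    · have haM' : a ∈ M'.verts := by
        rcases ha with h | h
        · exact h
        · exact absurd h hsup
      obtain ⟨b, hb, hbu⟩ := hM' haM'
      refine ⟨b, Or.inl ⟨hb, fun hmem => hsup (r.fst_mem_support_of_mem_edges hmem)⟩, ?_⟩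
      rintro c (⟨h1, _⟩ | ⟨_, h2⟩)
      · exact hbu c h1
      · exact absurd (r.fst_mem_support_of_mem_edges h2) hsup
  -- cardinality
  set k := L / 2 with hk
  have hL2 : L = 2 * k + 1 := by omega
  have hedge : M''.edgeSet =
      (M'.edgeSet \ (M'.edgeSet ∩ {e | e ∈ r.edges})) ∪ (M.edgeSet ∩ {e | e ∈ r.edges}) := by
    ext e
    induction e using Sym2.ind with
    | _ a b =>
      simp only [Subgraph.mem_edgeSet, hM'', Set.mem_union, Set.mem_diff, Set.mem_inter_iff,
        Set.mem_setOf_eq]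
      tauto
  set A := M'.edgeSet ∩ {e | e ∈ r.edges} with hA
  set B := M.edgeSet ∩ {e | e ∈ r.edges} with hB
  have hAeq : A = (fun i => s(s (2*i+1), s (2*i+2))) '' (Set.Iio k) := by
    ext e
    simp only [Set.mem_image, Set.mem_Iio, hA, Set.mem_inter_iff, Set.mem_setOf_eq]
    constructor
    · rintro ⟨he1, he2⟩
      obtain ⟨i, hiL, rfl⟩ := (r.mem_edges_iff' _).mp he2
      rw [← hL] at hiL
      have hpar : i % 2 = 1 := (hiffM' i hiL).mp (Subgraph.mem_edgeSet.mp he1)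
      refine ⟨i / 2, by omega, ?_⟩
      rw [show 2*(i/2)+2 = i+1 by omega, show 2*(i/2)+1 = i by omega]
    · rintro ⟨i, hik, rfl⟩
      have h1 : 2*i+1 < L := by omega
      refine ⟨Subgraph.mem_edgeSet.mpr ?_, (r.mem_edges_iff' _).mpr ⟨2*i+1, h1, by ring_nf; rfl⟩⟩
      have := (hiffM' (2*i+1) h1).mpr (by omega)
      rwa [show 2*i+1+1 = 2*i+2 by omega] at this
  have hBeq : B = (fun i => s(s (2*i), s (2*i+1))) '' (Set.Iio (k+1)) := by
    ext e
    simp only [Set.mem_image, Set.mem_Iio, hB, Set.mem_inter_iff, Set.mem_setOf_eq]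
    constructor
    · rintro ⟨he1, he2⟩
      obtain ⟨i, hiL, rfl⟩ := (r.mem_edges_iff' _).mp he2
      rw [← hL] at hiL
      have hpar : i % 2 = 0 := (hiffM i hiL).mp (Subgraph.mem_edgeSet.mp he1)
      refine ⟨i / 2, by omega, ?_⟩
      rw [show 2*(i/2)+1 = i+1 by omega, show 2*(i/2) = i by omega]
    · rintro ⟨i, hik, rfl⟩
      have h1 : 2*i < L := by omega
      refine ⟨Subgraph.mem_edgeSet.mpr ((hiffM (2*i) h1).mpr (by omega)),
        (r.mem_edges_iff' _).mpr ⟨2*i, h1, rfl⟩⟩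
  have hAcard : A.ncard = k := by
    rw [hAeq, Set.ncard_image_of_injOn, ← Finset.coe_Iio, Set.ncard_coe_finset, Nat.card_Iio]
    intro i hi j hj hij
    simp only [Set.mem_Iio] at hi hj
    rw [Sym2.eq_iff] at hij
    rcases hij with ⟨h1, _⟩ | ⟨h1, h2⟩
    · have := inj (by omega) (by omega) h1; omega
    · have := inj (i := 2*i+1) (j := 2*j+2) (by omega) (by omega) h1; omega
  have hBcard : B.ncard = k + 1 := by
    rw [hBeq, Set.ncard_image_of_injOn, ← Finset.coe_Iio, Set.ncard_coe_finset, Nat.card_Iio]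
    intro i hi j hj hij
    simp only [Set.mem_Iio] at hi hj
    rw [Sym2.eq_iff] at hij
    rcases hij with ⟨h1, _⟩ | ⟨h1, h2⟩
    · have := inj (i := 2*i) (j := 2*j) (by omega) (by omega) h1; omega
    · have := inj (i := 2*i) (j := 2*j+1) (by omega) (by omega) h1; omega
  have hAsub : A ⊆ M'.edgeSet := Set.inter_subset_left
  have hdisj : Disjoint (M'.edgeSet \ A) B := by
    rw [Set.disjoint_left]
    rintro e ⟨he1, _⟩ he2
    rw [hBeq] at he2
    obtain ⟨i, hik, rfl⟩ := he2
    simp only [Set.mem_Iio] at hik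
    have h1 : 2*i < L := by omega
    have := (hiffM' (2*i) h1).mp (Subgraph.mem_edgeSet.mp he1)
    omega
  have hkle : A.ncard ≤ M'.edgeSet.ncard := Set.ncard_le_ncard hAsub (Set.toFinite _)
  have hcard : M''.edgeSet.ncard = M'.edgeSet.ncard + 1 := by
    rw [hedge, Set.ncard_union_eq hdisj (Set.toFinite _) (Set.toFinite _),
      Set.ncard_diff hAsub (Set.toFinite _), hAcard, hBcard]
    omega
  have := hM'max M'' hmatch
  omega


open SimpleGraph SimpleGraph.Walk in
lemma step_lemma {V : Type*} [Fintype V] {G : SimpleGraph V} {U : Set V}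
    {M M' : G.Subgraph} {v : V}
    (hM : M.IsMatching) (hM' : M'.IsMatching)
    (hM'max : ∀ N : G.Subgraph, N.IsMatching → N.edgeSet.ncard ≤ M'.edgeSet.ncard)
    (hU : U ⊆ M.verts) (hvuns : v ∉ M'.verts) :
    ∀ (n : ℕ) (x : V) (q : G.Walk x v), q.IsPath → q.length % 2 = 0 →
    (∀ i, i < q.length → (M'.Adj (q.getVert i) (q.getVert (i+1)) ↔ i % 2 = 0)) →
    (∀ i, i < q.length → (M.Adj (q.getVert i) (q.getVert (i+1)) ↔ i % 2 = 1)) →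
    x ∈ U → Fintype.card V ≤ q.length + n →
    ∃ (w : V) (p : G.Walk v w), w ∉ U ∧ p.IsPath ∧ 0 < p.length ∧ p.length % 2 = 0 ∧
      (∀ (i : ℕ) (h : i < p.edges.length), (p.edges[i]'h ∈ M'.edgeSet ↔ i % 2 = 1)) := by
  intro n
  induction n with
  | zero =>
    intro x q hq _ _ _ _ hcard
    exfalso
    have h1 : q.support.length ≤ Fintype.card V := hq.support_nodup.length_le_card
    rw [length_support] at h1
    omega
  | succ n ih =>
    intro x q hq hqeven hqM' hqM hxU hcard
    have hx : x ∈ M.verts := hU hxU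
    obtain ⟨y, hxy, _⟩ := hM hx
    have hx0 : q.getVert 0 = x := q.getVert_zero
    -- y is not on the walk
    have hy_not : y ∉ q.support := by
      intro hmem
      obtain ⟨j, hj, hjL⟩ := mem_support_iff_exists_getVert.mp hmem
      obtain ⟨w, hw, hwu⟩ := hM (M.edge_vert hxy.symm)
      have e1 : x = w := hwu x hxy.symm
      rcases Nat.even_or_odd j with hje | hjo
      · rcases Nat.eq_zero_or_pos j with rfl | hjpos
        · exact hxy.adj_sub.ne (hx0.symm.trans hj)
        · have hpar : (j-1) % 2 = 1 := by rcases hje with ⟨m, rfl⟩; omega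
          have hadj : M.Adj (q.getVert (j-1)) (q.getVert j) := by
            have := (hqM (j-1) (by omega)).mpr hpar
            rwa [show j - 1 + 1 = j by omega] at this
          have e2 : q.getVert (j-1) = w := hwu _ (by rw [hj] at hadj; exact hadj.symm)
          have h0 : (0 : ℕ) = j - 1 :=
            getVert_injOn' hq (by omega) (by omega) (hx0.trans (e1.trans e2.symm))
          omega
      · have hjlt : j < q.length := by rcases hjo with ⟨m, rfl⟩; omega
        have hadj : M.Adj (q.getVert j) (q.getVert (j+1)) :=
          (hqM j hjlt).mpr (Nat.odd_iff.mp hjo)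
        have e2 : q.getVert (j+1) = w := hwu _ (by rw [hj] at hadj; exact hadj)
        have h0 : (0 : ℕ) = j + 1 :=
          getVert_injOn' hq (by omega) (by omega) (hx0.trans (e1.trans e2.symm))
        omega
    -- any M'-partner of x lies on the walk
    have hxpartner : ∀ c, M'.Adj x c → c ∈ q.support := by
      intro c hc
      rcases Nat.eq_zero_or_pos q.length with hlen | hlen
      · exact absurd ((Walk.eq_of_length_eq_zero hlen) ▸ hc.fst_mem) hvuns
      · have hadj : M'.Adj (q.getVert 0) (q.getVert 1) := (hqM' 0 hlen).mpr rfl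
        rw [hx0] at hadj
        obtain ⟨w, hw, hwu⟩ := hM' hc.fst_mem
        have hc1 : c = q.getVert 1 := (hwu c hc).trans (hwu _ hadj).symm
        rw [hc1]
        exact q.getVert_mem_support' (by omega)
    by_cases hyM' : y ∈ M'.verts
    case neg =>
      exfalso
      have hr : (Walk.cons hxy.symm.adj_sub q).IsPath := hq.cons hy_not
      refine aug_lemma M M' hM hM' hM'max (Walk.cons hxy.symm.adj_sub q) hr ?_ ?_ ?_ hyM' hvuns
      · rw [length_cons]; omega
      · intro i hi
        match i with
        | 0 =>
          rw [show (Walk.cons hxy.symm.adj_sub q).getVert 0 = y from rfl,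
            show (Walk.cons hxy.symm.adj_sub q).getVert 1 = x by
              rw [getVert_cons_succ, hx0]]
          exact iff_of_true hxy.symm rfl
        | (m+1) =>
          rw [length_cons] at hi
          rw [getVert_cons_succ, getVert_cons_succ]
          rw [show (m+1) % 2 = 0 ↔ m % 2 = 1 by omega]
          exact hqM m (by omega)
      · intro i hi
        match i with
        | 0 =>
          rw [show (Walk.cons hxy.symm.adj_sub q).getVert 0 = y from rfl,
            show (Walk.cons hxy.symm.adj_sub q).getVert 1 = x by
              rw [getVert_cons_succ, hx0]]
          exact iff_of_false (fun h => hyM' h.fst_mem) (by omega)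
        | (m+1) =>
          rw [length_cons] at hi
          rw [getVert_cons_succ, getVert_cons_succ]
          rw [show (m+1) % 2 = 1 ↔ m % 2 = 0 by omega]
          exact hqM' m (by omega)
    case pos =>
      obtain ⟨z, hyz, _⟩ := hM' hyM'
      have hz_not : z ∉ q.support := by
        intro hmem
        obtain ⟨j, hj, hjL⟩ := mem_support_iff_exists_getVert.mp hmem
        obtain ⟨w, hw, hwu⟩ := hM' (M'.edge_vert hyz.symm)
        have e1 : y = w := hwu y hyz.symm
        rcases Nat.even_or_odd j with hje | hjo
        · rcases Nat.eq_zero_or_pos j with rfl | hjpos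
          · have hzx : x = z := hx0.symm.trans hj
            exact hy_not (hxpartner y (by rw [hzx]; exact hyz.symm))
          · rcases eq_or_lt_of_le hjL with hjeq | hjlt
            · have hzv : z = v := by rw [← hj, hjeq, q.getVert_length]
              exact hvuns (hzv ▸ hyz.symm.fst_mem)
            · have hadj : M'.Adj (q.getVert j) (q.getVert (j+1)) :=
                (hqM' j hjlt).mpr (Nat.even_iff.mp hje)
              have e2 : q.getVert (j+1) = w := hwu _ (by rw [hj] at hadj; exact hadj)
              have hy1 : y = q.getVert (j+1) := e1.trans e2.symm
              exact hy_not (by rw [hy1]; exact q.getVert_mem_support' (by omega))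
        · have hjpos : 0 < j := hjo.pos
          have hpar : (j-1) % 2 = 0 := by rcases hjo with ⟨m, rfl⟩; omega
          have hadj : M'.Adj (q.getVert (j-1)) (q.getVert j) := by
            have := (hqM' (j-1) (by omega)).mpr hpar
            rwa [show j - 1 + 1 = j by omega] at this
          have e2 : q.getVert (j-1) = w := hwu _ (by rw [hj] at hadj; exact hadj.symm)
          have hy1 : y = q.getVert (j-1) := e1.trans e2.symm
          exact hy_not (by rw [hy1]; exact q.getVert_mem_support' (by omega))
      have hzyM : ¬ M.Adj y z := by
        intro h
        obtain ⟨w, hw, hwu⟩ := hM (M.edge_vert hxy.symm)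
        have hzx : z = x := (hwu z h).trans (hwu x hxy.symm).symm
        exact hz_not (by rw [hzx]; exact q.start_mem_support)
      have hxyM' : ¬ M'.Adj y x := fun h => hy_not (hxpartner y h.symm)
      set q' : G.Walk z v := Walk.cons hyz.symm.adj_sub (Walk.cons hxy.symm.adj_sub q) with hq'def
      have hq' : q'.IsPath := by
        refine (hq.cons hy_not).cons ?_
        simp only [support_cons, List.mem_cons]
        push_neg
        exact ⟨hyz.adj_sub.ne', hz_not⟩
      have hq'len : q'.length = q.length + 2 := by simp [hq'def, length_cons]
      have hv0 : q'.getVert 0 = z := rfl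
      have hv1 : q'.getVert 1 = y := rfl
      have hv2 : q'.getVert 2 = x := by
        rw [hq'def, getVert_cons_succ, getVert_cons_succ, hx0]
      have hvs : ∀ m, q'.getVert (m+2) = q.getVert m := by
        intro m
        rw [hq'def, getVert_cons_succ, getVert_cons_succ]
      have hq'M' : ∀ i, i < q'.length → (M'.Adj (q'.getVert i) (q'.getVert (i+1)) ↔ i % 2 = 0) := by
        intro i hi
        match i with
        | 0 => rw [hv0, hv1]; exact iff_of_true hyz.symm rfl
        | 1 => rw [hv1, hv2]; exact iff_of_false hxyM' (by omega)
        | (m+2) =>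
          rw [hvs m, hvs (m+1)]
          rw [show (m+2) % 2 = 0 ↔ m % 2 = 0 by omega]
          exact hqM' m (by omega)
      have hq'M : ∀ i, i < q'.length → (M.Adj (q'.getVert i) (q'.getVert (i+1)) ↔ i % 2 = 1) := by
        intro i hi
        match i with
        | 0 => rw [hv0, hv1]; exact iff_of_false (fun h => hzyM h.symm) (by omega)
        | 1 => rw [hv1, hv2]; exact iff_of_true hxy.symm rfl
        | (m+2) =>
          rw [hvs m, hvs (m+1)]
          rw [show (m+2) % 2 = 1 ↔ m % 2 = 1 by omega]
          exact hqM m (by omega)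
      by_cases hzU : z ∈ U
      · exact ih z q' hq' (by rw [hq'len]; omega) hq'M' hq'M hzU (by rw [hq'len]; omega)
      · refine ⟨z, q'.reverse, hzU, hq'.reverse, ?_, ?_, ?_⟩
        · rw [length_reverse]; omega
        · rw [length_reverse]; omega
        · intro i h
          rw [length_edges, length_reverse] at h
          rw [q'.reverse.getElem_edges_eq i (by rw [length_edges, length_reverse]; exact h)]
          rw [getVert_reverse, getVert_reverse]
          have h1 : q'.length - i = (q'.length - (i+1)) + 1 := by omega
          rw [Sym2.eq_swap, Subgraph.mem_edgeSet, h1]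
          rw [hq'M' (q'.length - (i+1)) (by omega)]
          omega


theorem stmt_15 {V : Type*} [Fintype V] (G : SimpleGraph V) (U : Set V)
    (M M' : G.Subgraph) (hM : M.IsMatching) (hM' : M'.IsMatching)
    (hMmax : ∀ N : G.Subgraph, N.IsMatching → N.edgeSet.ncard ≤ M.edgeSet.ncard)
    (hM'max : ∀ N : G.Subgraph, N.IsMatching → N.edgeSet.ncard ≤ M'.edgeSet.ncard)
    (hU : U ⊆ M.verts) (v : V) (hv : v ∈ U) (hvuns : v ∉ M'.verts) :
    ∃ (w : V) (p : G.Walk v w), w ∉ U ∧ p.IsPath ∧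
      0 < p.length ∧ p.length % 2 = 0 ∧
      (∀ (i : ℕ) (h : i < p.edges.length),
        (p.edges[i]'h ∈ M'.edgeSet ↔ i % 2 = 1)) := by
  refine step_lemma hM hM' hM'max hU hvuns (Fintype.card V) v SimpleGraph.Walk.nil
    SimpleGraph.Walk.IsPath.nil rfl ?_ ?_ hv (by simp)
  · intro i hi; simp at hi
  · intro i hi; simp at hi
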